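/- Let A be a finite temporal Heyting algebra. Then a subset F ⊆ A is a ◆-filter if and only if F = ↑a for some ◆-compatible element a ∈ A; moreover, the map F ↦ ⊓F is an order-reversing bijection from the ◆-filters of A (ordered by inclusion) onto the ◆-compatible elements of A (ordered by ≤), with inverse a ↦ ↑a. -/

import Mathlib

/-- A ◆-filter of a temporal Heyting algebra. -/
def IsDiaFilter {A : Type*} [HeytingAlgebra A] (dia : A → A) (F : Set A) : Prop :=
  (⊤ : A) ∈ F ∧ (∀ a b : A, a ∈ F → a ≤ b → b ∈ F) ∧
  (∀ a b : A, a ∈ F → b ∈ F → a ⊓ b ∈ F) ∧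
  (∀ a b : A, a ⇨ b ∈ F → dia a ⇨ dia b ∈ F)

/-- A ◆-compatible element of a temporal Heyting algebra. -/
def DiaCompat {A : Type*} [HeytingAlgebra A] (dia : A → A) (a : A) : Prop :=
  ∀ b : A, a ⊓ dia b ≤ dia (a ⊓ b)

/-- In a finite temporal Heyting algebra, the ◆-filters are exactly the principal
filters of ◆-compatible elements, and `F ↦ ⊓F` is an order-reversing bijection
from ◆-filters onto ◆-compatible elements with inverse `a ↦ ↑a`. -/
theorem stmt10 {A : Type*} [HeytingAlgebra A] [Finite A] (box dia : A → A)
    (hbox_meet : ∀ a b : A, box (a ⊓ b) = box a ⊓ box b)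
    (hbox_incr : ∀ a : A, a ≤ box a)
    (hbox_front : ∀ a b : A, box a ≤ b ⊔ (b ⇨ a))
    (hadj : ∀ a b : A, dia a ≤ b ↔ a ≤ box b) :
    (∀ F : Set A, IsDiaFilter dia F ↔ ∃ a : A, DiaCompat dia a ∧ F = Set.Ici a) ∧
    (∀ F : Set A, IsDiaFilter dia F →
      ∃ a : A, IsLeast F a ∧ DiaCompat dia a ∧ F = Set.Ici a) ∧
    (∀ a : A, DiaCompat dia a → IsDiaFilter dia (Set.Ici a)) ∧
    (∀ F G : Set A, IsDiaFilter dia F → IsDiaFilter dia G →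
      ∀ a b : A, IsLeast F a → IsLeast G b → (F ⊆ G ↔ b ≤ a)) := by
  have dmono : ∀ x y : A, x ≤ y → dia x ≤ dia y := fun x y h =>
    (hadj _ _).mpr (h.trans ((hadj _ _).mp le_rfl))
  have key2 : ∀ F : Set A, IsDiaFilter dia F →
      ∃ a : A, IsLeast F a ∧ DiaCompat dia a ∧ F = Set.Ici a := by
    intro F hF
    obtain ⟨htop, hup, hmeet, hdia⟩ := hF
    obtain ⟨a, haF, hmin⟩ : ∃ a ∈ F, ∀ a' ∈ F, id a' ≤ id a → id a = id a' := by
      obtain ⟨a, ha⟩ := (Set.toFinite F).exists_minimal ⟨⊤, htop⟩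
      exact ⟨a, ha.1, fun a' h1 h2 => le_antisymm (ha.2 h1 h2) h2⟩
    have hleast : IsLeast F a := by
      refine ⟨haF, fun x hx => ?_⟩
      have h1 := hmin (a ⊓ x) (hmeet a x haF hx) inf_le_left
      simpa using le_trans (le_of_eq h1) inf_le_right
    have hcompat : DiaCompat dia a := by
      intro b
      have h2 : b ⇨ (a ⊓ b) ∈ F := hup a _ haF (le_himp_iff.mpr le_rfl)
      exact le_himp_iff.mp (hleast.2 (hdia _ _ h2))
    refine ⟨a, hleast, hcompat, ?_⟩
    ext x
    exact ⟨fun hx => hleast.2 hx, fun hx => hup a x haF hx⟩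
  have key3 : ∀ a : A, DiaCompat dia a → IsDiaFilter dia (Set.Ici a) := by
    intro a ha
    refine ⟨le_top, fun x y hx hxy => le_trans hx hxy,
      fun x y hx hy => le_inf hx hy, fun x y hxy => ?_⟩
    have h1 : a ⊓ x ≤ y := le_himp_iff.mp hxy
    have h2 : a ⊓ dia x ≤ dia y := le_trans (ha x) (dmono _ _ h1)
    exact le_himp_iff.mpr h2
  refine ⟨?_, key2, key3, ?_⟩
  · intro F
    constructor
    · intro hF
      obtain ⟨a, _, hc, hEq⟩ := key2 F hF
      exact ⟨a, hc, hEq⟩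
    · rintro ⟨a, hc, rfl⟩
      exact key3 a hc
  · intro F G hF hG a b ha hb
    constructor
    · intro hsub
      exact hb.2 (hsub ha.1)
    · intro hba x hx
      exact hG.2.1 b x hb.1 (le_trans hba (ha.2 hx))
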